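/- (Optimality of the natural partition) In the mixture setting with pairwise distinct cluster means μ_k and positive proportions π_k, for every relevant feature j ≤ p* and every partition C̃ of {1,...,n} into K nonempty clusters, E[a_j(C̃)] ≤ E[a_j(C*)], where C* is the natural partition. Consequently, C* maximizes Σ_{j=1}^p E[a_j(C)] over all K-partitions C. -/

import Mathlib

open MeasureTheory ProbabilityTheory Finset

/-- Optimality of the natural partition: in the mixture model, for every relevant
feature the expected BCSS of any `K`-partition is at most that of the natural
partition, and consequently the natural partition maximizes the total expected BCSS. -/
theorem stmt_13 {Ω : Type*} [MeasurableSpace Ω] (P : Measure Ω) [IsProbabilityMeasure P]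
    (n p pstar K : ℕ) (hn : 0 < n) (hp : pstar ≤ p)
    (x : Fin p → Fin n → Ω → ℝ)
    (g : Fin n → Fin K) (hg : Function.Surjective g)
    (ν : Fin p → Fin K → ℝ)
    (hmeas : ∀ j i, Measurable (x j i))
    (hL2 : ∀ j i, MemLp (x j i) 2 P)
    (hindep : iIndepFun (fun q : Fin p × Fin n => x q.1 q.2) P)
    (hmean : ∀ j i, ∫ ω, x j i ω ∂P = if (j : ℕ) < pstar then ν j (g i) else 0)
    (hvar : ∀ j i, ∫ ω, (x j i ω - ∫ ω', x j i ω' ∂P) ^ 2 ∂P = 1)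
    (hdist : ∀ j : Fin p, (j : ℕ) < pstar → ∀ k k', k ≠ k' → ν j k ≠ ν j k')
    (Ctil : Fin K → Finset (Fin n))
    (hne : ∀ k, (Ctil k).Nonempty)
    (hdisj : ∀ k k', k ≠ k' → Disjoint (Ctil k) (Ctil k'))
    (hcover : ∀ i : Fin n, ∃ k, i ∈ Ctil k) :
    (∀ j : Fin p, (j : ℕ) < pstar →
      ∫ ω, (∑ k, (∑ i ∈ Ctil k, x j i ω) ^ 2 / ((Ctil k).card : ℝ) -
          (∑ i, x j i ω) ^ 2 / (n : ℝ)) ∂P ≤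
      ∫ ω, (∑ k, (∑ i ∈ Finset.univ.filter (fun i => g i = k), x j i ω) ^ 2 /
            ((Finset.univ.filter (fun i => g i = k)).card : ℝ) -
          (∑ i, x j i ω) ^ 2 / (n : ℝ)) ∂P) ∧
    (∑ j, ∫ ω, (∑ k, (∑ i ∈ Ctil k, x j i ω) ^ 2 / ((Ctil k).card : ℝ) -
          (∑ i, x j i ω) ^ 2 / (n : ℝ)) ∂P ≤
      ∑ j, ∫ ω, (∑ k, (∑ i ∈ Finset.univ.filter (fun i => g i = k), x j i ω) ^ 2 /
            ((Finset.univ.filter (fun i => g i = k)).card : ℝ) -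
          (∑ i, x j i ω) ^ 2 / (n : ℝ)) ∂P) := by
  classical
  set G : Fin K → Finset (Fin n) := fun k => Finset.univ.filter (fun i => g i = k) with hG
  -- a labelling function for the partition `Ctil`
  have hh : ∀ i, i ∈ Ctil ((hcover i).choose) := fun i => (hcover i).choose_spec
  set h : Fin n → Fin K := fun i => (hcover i).choose with hhdef
  have hfib : ∀ k, Ctil k = Finset.univ.filter (fun i => h i = k) := by
    intro k
    ext i
    simp only [Finset.mem_filter, Finset.mem_univ, true_and]
    constructor
    · intro hi
      by_contra hne'
      exact Finset.disjoint_left.mp (hdisj _ _ hne') (hh i) hi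
    · intro hk; exact hk ▸ hh i
  have hGne : ∀ k, (G k).Nonempty := by
    intro k
    obtain ⟨i, hi⟩ := hg k
    exact ⟨i, by simp [hG, hi]⟩
  have key : ∀ j : Fin p,
      ∫ ω, (∑ k, (∑ i ∈ Ctil k, x j i ω) ^ 2 / ((Ctil k).card : ℝ) -
          (∑ i, x j i ω) ^ 2 / (n : ℝ)) ∂P ≤
      ∫ ω, (∑ k, (∑ i ∈ G k, x j i ω) ^ 2 / ((G k).card : ℝ) -
          (∑ i, x j i ω) ^ 2 / (n : ℝ)) ∂P := by
    intro j
    set m : Fin n → ℝ := fun i => ∫ ω, x j i ω ∂P with hm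
    have hint : ∀ i, Integrable (x j i) P := fun i => (hL2 j i).integrable one_le_two
    have hmul : ∀ i i', Integrable (fun ω => x j i ω * x j i' ω) P := by
      intro i i'
      have h2 := (MemLp.smul (r := 1) (hL2 j i') (hL2 j i))
      rw [memLp_one_iff_integrable] at h2
      exact h2
    have hsq : ∀ i, ∫ ω, x j i ω ^ 2 ∂P = m i ^ 2 + 1 := by
      intro i
      have h1 := hvar j i
      have hint2 : Integrable (fun ω => x j i ω ^ 2) P := (hL2 j i).integrable_sq
      have hint3 : Integrable (fun ω => 2 * m i * x j i ω - m i ^ 2) P :=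
        (((hint i).const_mul _)).sub (integrable_const _)
      have h3 : ∫ ω, (x j i ω - m i) ^ 2 ∂P
          = ∫ ω, x j i ω ^ 2 ∂P - (2 * m i * m i - m i ^ 2) := by
        have h2 : ∀ ω, (x j i ω - m i) ^ 2
            = x j i ω ^ 2 - (2 * m i * x j i ω - m i ^ 2) := by intro ω; ring
        simp_rw [h2]
        rw [integral_sub hint2 hint3,
          integral_sub ((hint i).const_mul _) (integrable_const _),
          integral_const_mul, integral_const, probReal_univ, smul_eq_mul,
          one_mul]
      rw [h1] at h3
      nlinarith [h3]
    have hcov : ∀ i i', ∫ ω, x j i ω * x j i' ω ∂P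
        = m i * m i' + (if i = i' then 1 else 0) := by
      intro i i'
      by_cases hii : i = i'
      · subst hii
        simp only [if_pos rfl]
        have h4 := hsq i
        simp_rw [sq] at h4
        rw [h4]
        norm_num
      · have hne2 : ((j, i) : Fin p × Fin n) ≠ (j, i') := fun hE => hii (congrArg Prod.snd hE)
        have hind : IndepFun (x j i) (x j i') P := hindep.indepFun hne2
        have h5 := hind.integral_fun_mul_eq_mul_integral (hmeas j i).aestronglyMeasurable
          (hmeas j i').aestronglyMeasurable
        simp only [if_neg hii, add_zero]
        exact h5
    have hsumsq : ∀ S : Finset (Fin n),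
        ∫ ω, (∑ i ∈ S, x j i ω) ^ 2 ∂P = (∑ i ∈ S, m i) ^ 2 + (S.card : ℝ) := by
      intro S
      have hfun : ∀ ω, (∑ i ∈ S, x j i ω) ^ 2 = ∑ i ∈ S, ∑ i' ∈ S, x j i ω * x j i' ω := by
        intro ω; rw [sq, Finset.sum_mul_sum]
      simp_rw [hfun]
      rw [integral_finset_sum S (fun i _ => integrable_finset_sum S (fun i' _ => hmul i i'))]
      have h6 : ∀ i ∈ S, ∫ ω, ∑ i' ∈ S, x j i ω * x j i' ω ∂P
          = ∑ i' ∈ S, (m i * m i' + if i = i' then 1 else 0) := by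
        intro i _
        rw [integral_finset_sum S (fun i' _ => hmul i i')]
        exact Finset.sum_congr rfl fun i' _ => hcov i i'
      rw [Finset.sum_congr rfl h6]
      have h7 : ∀ i ∈ S, ∑ i' ∈ S, (m i * m i' + if i = i' then 1 else 0)
          = (∑ i' ∈ S, m i * m i') + if i ∈ S then (1 : ℝ) else 0 := by
        intro i hi
        rw [Finset.sum_add_distrib, Finset.sum_ite_eq]
      rw [Finset.sum_congr rfl h7, Finset.sum_add_distrib]
      have h8 : ∑ i ∈ S, ∑ i' ∈ S, m i * m i' = (∑ i ∈ S, m i) ^ 2 := by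
        rw [sq, Finset.sum_mul_sum]
      have h9 : ∑ i ∈ S, (if i ∈ S then (1 : ℝ) else 0) = (S.card : ℝ) := by
        rw [Finset.sum_congr rfl (fun i hi => if_pos hi), Finset.sum_const, nsmul_eq_mul,
          mul_one]
      rw [h8, h9]
    have hsqS : ∀ S : Finset (Fin n), Integrable (fun ω => (∑ i ∈ S, x j i ω) ^ 2) P :=
      fun S => (memLp_finset_sum S (fun i _ => hL2 j i)).integrable_sq
    have hn' : (n : ℝ) ≠ 0 := Nat.cast_ne_zero.mpr hn.ne'
    have hEa : ∀ (C : Fin K → Finset (Fin n)), (∀ k, (C k).Nonempty) →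
        ∫ ω, (∑ k, (∑ i ∈ C k, x j i ω) ^ 2 / ((C k).card : ℝ) -
            (∑ i, x j i ω) ^ 2 / (n : ℝ)) ∂P
        = (∑ k, (∑ i ∈ C k, m i) ^ 2 / ((C k).card : ℝ) + (K : ℝ))
          - ((∑ i, m i) ^ 2 / (n : ℝ) + 1) := by
      intro C hC
      rw [integral_sub (integrable_finset_sum _ (fun k _ => (hsqS (C k)).div_const _))
        ((hsqS Finset.univ).div_const _)]
      rw [integral_finset_sum _ (fun k _ => (hsqS (C k)).div_const _)]
      have hterm : ∀ S : Finset (Fin n), ∀ c : ℝ,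
          ∫ ω, (∑ i ∈ S, x j i ω) ^ 2 / c ∂P = ((∑ i ∈ S, m i) ^ 2 + (S.card : ℝ)) / c := by
        intro S c
        rw [integral_div, hsumsq]
      have hcard : ∀ k, ((C k).card : ℝ) ≠ 0 := fun k =>
        Nat.cast_ne_zero.mpr (Finset.card_pos.mpr (hC k)).ne'
      have h10 : ∀ k : Fin K, ∫ ω, (∑ i ∈ C k, x j i ω) ^ 2 / ((C k).card : ℝ) ∂P
          = (∑ i ∈ C k, m i) ^ 2 / ((C k).card : ℝ) + 1 := by
        intro k
        rw [hterm, add_div, div_self (hcard k)]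
      rw [Finset.sum_congr rfl fun k _ => h10 k, Finset.sum_add_distrib, Finset.sum_const,
        Finset.card_univ, Fintype.card_fin, nsmul_eq_mul, mul_one, hterm]
      have h11 : ((Finset.univ : Finset (Fin n)).card : ℝ) = (n : ℝ) := by
        rw [Finset.card_univ, Fintype.card_fin]
      rw [h11, add_div, div_self hn']
    have CS : ∀ k, (∑ i ∈ Ctil k, m i) ^ 2 / ((Ctil k).card : ℝ) ≤ ∑ i ∈ Ctil k, m i ^ 2 := by
      intro k
      have hc : 0 < ((Ctil k).card : ℝ) := by
        exact_mod_cast Finset.card_pos.mpr (hne k)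
      rw [div_le_iff₀ hc]
      calc (∑ i ∈ Ctil k, m i) ^ 2 ≤ ((Ctil k).card : ℝ) * ∑ i ∈ Ctil k, m i ^ 2 :=
            sq_sum_le_card_mul_sum_sq
        _ = (∑ i ∈ Ctil k, m i ^ 2) * ((Ctil k).card : ℝ) := mul_comm _ _
    have hA : ∑ k, (∑ i ∈ Ctil k, m i) ^ 2 / ((Ctil k).card : ℝ) ≤ ∑ i, m i ^ 2 := by
      calc ∑ k, (∑ i ∈ Ctil k, m i) ^ 2 / ((Ctil k).card : ℝ)
          ≤ ∑ k, ∑ i ∈ Ctil k, m i ^ 2 := Finset.sum_le_sum fun k _ => CS k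
        _ = ∑ i, m i ^ 2 := by
            simp_rw [hfib]
            exact Finset.sum_fiberwise Finset.univ h (fun i => m i ^ 2)
    have hB : ∑ k, (∑ i ∈ G k, m i) ^ 2 / ((G k).card : ℝ) = ∑ i, m i ^ 2 := by
      have h12 : ∀ k : Fin K, (∑ i ∈ G k, m i) ^ 2 / ((G k).card : ℝ)
          = ∑ i ∈ G k, m i ^ 2 := by
        intro k
        set c : ℝ := (if (j : ℕ) < pstar then ν j k else 0) with hc_def
        have hval : ∀ i ∈ G k, m i = c := by
          intro i hi
          simp only [hG, Finset.mem_filter, Finset.mem_univ, true_and] at hi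
          show (∫ ω, x j i ω ∂P) = c
          rw [hmean j i, hi]
        have hc : ((G k).card : ℝ) ≠ 0 :=
          Nat.cast_ne_zero.mpr (Finset.card_pos.mpr (hGne k)).ne'
        have hsum1 : ∑ i ∈ G k, m i = ((G k).card : ℝ) * c := by
          rw [Finset.sum_congr rfl hval, Finset.sum_const, nsmul_eq_mul]
        have hsum2 : ∑ i ∈ G k, m i ^ 2 = ((G k).card : ℝ) * c ^ 2 := by
          rw [Finset.sum_congr rfl (fun i hi => congrArg (· ^ 2) (hval i hi)),
            Finset.sum_const, nsmul_eq_mul]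
        rw [hsum1, hsum2]
        field_simp
      rw [Finset.sum_congr rfl fun k _ => h12 k]
      exact Finset.sum_fiberwise Finset.univ g (fun i => m i ^ 2)
    rw [hEa Ctil hne, hEa G hGne]
    have := hA.trans_eq hB.symm
    linarith
  exact ⟨fun j _ => key j, Finset.sum_le_sum fun j _ => key j⟩
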